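/- Let A be a nonnegative symmetric real n×n matrix with zero diagonal and let G be the simple graph on [n] with an edge {i,j} if and only if A(i,j) ≠ 0. If ρ_per(A) = k, then G contains a Sachs subgraph on exactly k vertices. -/

import Mathlib

/-- The permanent of a (possibly rectangular) matrix whose rows and columns are indexed by
finite types: the sum over all bijections `e : ι ≃ κ` of `∏ i, M i (e i)`.
For a square matrix this is the usual permanent `∑_{σ ∈ S_n} ∏_{i} M i (σ i)`. -/
noncomputable def Matrix.per {ι κ R : Type*} [Fintype ι] [Fintype κ] [DecidableEq ι]
    [DecidableEq κ] [CommSemiring R] (M : Matrix ι κ R) : R :=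
  ∑ e : ι ≃ κ, ∏ i, M i (e i)

/-- The permanental rank `ρ_per(A)` of an `n × n` matrix: the largest `k` such that some
`k × k` submatrix (rows chosen by an injection `f`, columns by an injection `g`) has
nonzero permanent. -/
noncomputable def permRank {n : ℕ} {R : Type*} [CommSemiring R]
    (A : Matrix (Fin n) (Fin n) R) : ℕ :=
  sSup {k | ∃ f g : Fin k → Fin n, Function.Injective f ∧ Function.Injective g ∧
    (A.submatrix f g).per ≠ 0}

/-- The (simple, undirected) graph on `[n]` associated with a matrix `A`:
`i` and `j` are adjacent iff `i ≠ j` and the corresponding entry is nonzero.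
(For a symmetric matrix with zero diagonal this is exactly `A i j ≠ 0`.) -/
def graphOf {n : ℕ} (A : Matrix (Fin n) (Fin n) ℝ) : SimpleGraph (Fin n) :=
  SimpleGraph.fromRel (fun i j => A i j ≠ 0)

/-- The sign that a matrix `A` attaches to an unordered pair of vertices
(for a symmetric matrix, the entry of `A` at that pair). -/
noncomputable def edgeSign {n : ℕ} (A : Matrix (Fin n) (Fin n) ℝ) : Sym2 (Fin n) → ℝ :=
  Sym2.lift ⟨fun i j => A (min i j) (max i j), fun i j => by simp only [inf_comm, sup_comm]⟩

/-- A Sachs subgraph: a subgraph in which every connected component is a single edge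
(a component with exactly two vertices) or a cycle (a component all of whose vertices
have degree two). -/
def IsSachs {V : Type*} {G : SimpleGraph V} (H : G.Subgraph) : Prop :=
  ∀ C : H.coe.ConnectedComponent,
    C.supp.ncard = 2 ∨ ∀ v ∈ C.supp, (H.neighborSet v.val).ncard = 2

/-- Let `A` be a nonnegative symmetric real `n × n` matrix with zero
diagonal and `G` the simple graph on `[n]` with an edge `{i, j}` iff `A i j ≠ 0`.
If `ρ_per(A) = k`, then `G` contains a Sachs subgraph on exactly `k` vertices. -/
private lemma perm_two_orbit {β : Type*} (e : Equiv.Perm β) (v : β) (h : e (e v) = v) :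
    ∀ z : ℤ, (e ^ z) v = v ∨ (e ^ z) v = e v := by
  have hcomm : ∀ (z : ℤ) (x : β), (e ^ z) (e x) = e ((e ^ z) x) := by
    intro z x
    have h1 : e ^ z * e = e * e ^ z := by
      rw [← zpow_add_one, ← zpow_one_add, add_comm]
    calc (e ^ z) (e x) = (e ^ z * e) x := rfl
      _ = (e * e ^ z) x := by rw [h1]
      _ = e ((e ^ z) x) := rfl
  have hinv : e⁻¹ v = e v := by
    conv_lhs => rw [← h]
    simp
  intro z
  induction z using Int.induction_on with
  | zero => left; simp
  | succ i ih =>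
    have h2 : (e ^ ((i : ℤ) + 1)) v = e ((e ^ (i : ℤ)) v) := by
      rw [zpow_add_one]
      calc (e ^ (i:ℤ) * e) v = (e ^ (i:ℤ)) (e v) := rfl
        _ = e ((e ^ (i:ℤ)) v) := hcomm _ _
    rcases ih with h3 | h3
    · right; rw [h2, h3]
    · left; rw [h2, h3, h]
  | pred i ih =>
    have h2 : (e ^ (-(i : ℤ) - 1)) v = e ((e ^ (-(i : ℤ))) v) := by
      rw [zpow_sub_one]
      calc (e ^ (-(i:ℤ)) * e⁻¹) v = (e ^ (-(i:ℤ))) (e⁻¹ v) := rfl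
        _ = (e ^ (-(i:ℤ))) (e v) := by rw [hinv]
        _ = e ((e ^ (-(i:ℤ))) v) := hcomm _ _
    rcases ih with h3 | h3
    · right; rw [h2, h3]
    · left; rw [h2, h3, h]


private lemma core_lemma {n : ℕ} (A : Matrix (Fin n) (Fin n) ℝ)
    (hsym : A.IsSymm) (hdiag : ∀ i, A i i = 0) (k : ℕ)
    (hmax : ∀ (I' J' : Finset (Fin n)) (σ' : Fin n → Fin n),
      I'.card = k + 1 → J'.card = k + 1 → (∀ x ∈ I', σ' x ∈ J') →
      Set.InjOn σ' ↑I' → (∀ x ∈ I', A x (σ' x) ≠ 0) → False) :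
    ∀ (d : ℕ) (I J : Finset (Fin n)) (σ : Fin n → Fin n),
      (J \ I).card = d → I.card = k → J.card = k →
      (∀ x ∈ I, σ x ∈ J) → Set.InjOn σ ↑I → I.image σ = J →
      (∀ x ∈ I, A x (σ x) ≠ 0) →
      ∃ (T : Finset (Fin n)) (τ : Fin n → Fin n), T.card = k ∧
        (∀ x ∈ T, τ x ∈ T) ∧ Set.InjOn τ ↑T ∧ T.image τ = T ∧
        (∀ x ∈ T, A x (τ x) ≠ 0) := by
  classical
  intro d
  induction d with
  | zero =>
    intro I J σ hd hI hJ hmap hinj himg hnz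
    have hJI : J ⊆ I := Finset.sdiff_eq_empty_iff_subset.mp (Finset.card_eq_zero.mp hd)
    have hIJ : J = I := Finset.eq_of_subset_of_card_le hJI (by omega)
    exact ⟨I, σ, hI, fun x hx => hIJ ▸ hmap x hx, hinj, himg.trans hIJ, hnz⟩
  | succ d ih =>
    intro I J σ hd hI hJ hmap hinj himg hnz
    obtain ⟨a, ha⟩ : (J \ I).Nonempty := Finset.card_pos.mp (by omega)
    have haJ : a ∈ J := (Finset.mem_sdiff.mp ha).1
    have haI : a ∉ I := (Finset.mem_sdiff.mp ha).2
    obtain ⟨ψ, hψ⟩ : ∃ ψ : Fin n → Fin n, ∀ y ∈ J, ψ y ∈ I ∧ σ (ψ y) = y := by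
      refine ⟨fun y => if h : ∃ x ∈ I, σ x = y then h.choose else y, ?_⟩
      intro y hy
      have hy' : y ∈ I.image σ := by rw [himg]; exact hy
      have hex : ∃ x ∈ I, σ x = y := Finset.mem_image.mp hy'
      simp only [dif_pos hex]
      exact ⟨hex.choose_spec.1, hex.choose_spec.2⟩
    set u : ℕ → Fin n := fun i => ψ^[i] a with hu
    have hu0 : u 0 = a := rfl
    have hus : ∀ i, u (i + 1) = ψ (u i) := fun i => Function.iterate_succ_apply' ψ i a
    have hstep : ∀ i, u i ∈ J → u (i + 1) ∈ I ∧ σ (u (i + 1)) = u i := by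
      intro i hi
      rw [hus i]
      exact hψ (u i) hi
    have hexists : ∃ i, u i ∉ J := by
      by_contra hcon
      push_neg at hcon
      have hstep' : ∀ i, σ (u (i + 1)) = u i := fun i => (hstep i (hcon i)).2
      have hmemI : ∀ i, u (i + 1) ∈ I := fun i => (hstep i (hcon i)).1
      have hdesc : ∀ i dd, u i = u (i + dd) → dd = 0 := by
        intro i
        induction i with
        | zero =>
          intro dd hdd
          by_contra h0
          obtain ⟨d', rfl⟩ : ∃ d', dd = d' + 1 := ⟨dd - 1, by omega⟩
          rw [zero_add] at hdd
          rw [hu0] at hdd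
          exact haI (hdd ▸ hmemI d')
        | succ i ihh =>
          intro dd hdd
          apply ihh dd
          rw [show i + 1 + dd = i + dd + 1 from by omega] at hdd
          rw [← hstep' i, ← hstep' (i + dd), hdd]
      obtain ⟨i, j, hij, huij⟩ := Finite.exists_ne_map_eq_of_infinite u
      rcases Nat.lt_trichotomy i j with h | h | h
      · have := hdesc i (j - i) (by rw [show i + (j - i) = j from by omega]; exact huij)
        omega
      · exact hij h
      · have := hdesc j (i - j) (by rw [show j + (i - j) = i from by omega]; exact huij.symm)
        omega
    set m := Nat.find hexists with hmdef
    have hmJ : u m ∉ J := Nat.find_spec hexists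
    have hminJ : ∀ i, i < m → u i ∈ J := fun i hi => not_not.mp (Nat.find_min hexists hi)
    have hm1 : 1 ≤ m := by
      rcases Nat.eq_zero_or_pos m with h | h
      · exfalso; apply hmJ; rw [h, hu0]; exact haJ
      · exact h
    have harc : ∀ i, i < m → u (i + 1) ∈ I ∧ σ (u (i + 1)) = u i :=
      fun i hi => hstep i (hminJ i hi)
    have huI : ∀ i, 1 ≤ i → i ≤ m → u i ∈ I := by
      intro i h1 h2
      have := (harc (i - 1) (by omega)).1
      rwa [show i - 1 + 1 = i from by omega] at this
    have hinj_u : ∀ i, i ≤ m → ∀ j, j ≤ m → u i = u j → i = j := by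
      have hdesc : ∀ i dd, i + dd ≤ m → u i = u (i + dd) → dd = 0 := by
        intro i
        induction i with
        | zero =>
          intro dd hle hdd
          by_contra h0
          have hmem : u dd ∈ I := huI dd (by omega) (by omega)
          rw [zero_add] at hdd
          rw [← hdd, hu0] at hmem
          exact haI hmem
        | succ i ihh =>
          intro dd hle hdd
          apply ihh dd (by omega)
          have e1 := (harc i (by omega)).2
          have e2 := (harc (i + dd) (by omega)).2
          rw [show i + 1 + dd = i + dd + 1 from by omega] at hdd
          rw [← e1, ← e2, hdd]
      intro i hi j hj huij
      rcases Nat.lt_trichotomy i j with h | h | h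
      · have := hdesc i (j - i) (by omega) (by rw [show i + (j - i) = j from by omega]; exact huij)
        omega
      · exact h
      · have := hdesc j (i - j) (by omega) (by rw [show j + (i - j) = i from by omega]; exact huij.symm)
        omega
    have humI : u m ∈ I := huI m hm1 le_rfl
    have hnzarc : ∀ i, i < m → A (u (i + 1)) (u i) ≠ 0 := by
      intro i hi
      have := hnz (u (i + 1)) (harc i hi).1
      rwa [(harc i hi).2] at this
    have hnzarc' : ∀ i, i < m → A (u i) (u (i + 1)) ≠ 0 := by
      intro i hi
      rw [hsym.apply]
      exact hnzarc i hi
    set lo := (m + 1) % 2 with hlodef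
    have hpar : (m - lo) % 2 = 1 ∧ lo ≤ 1 ∧ lo ≤ m := by omega
    set p : ℕ → ℕ := fun i => if (m - i) % 2 = 0 then i - 1 else i + 1 with hpdef
    have hpeq : ∀ j, p j = if (m - j) % 2 = 0 then j - 1 else j + 1 := fun _ => rfl
    have hp_mem : ∀ i, lo ≤ i → i ≤ m → lo ≤ p i ∧ p i ≤ m := by
      intro i h1 h2
      rw [hpeq]
      split_ifs with h <;> omega
    have hp_invol : ∀ i, lo ≤ i → i ≤ m → p (p i) = i := by
      intro i h1 h2
      rw [hpeq, hpeq]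
      split_ifs with h h' h' <;> omega
    have hp_arc : ∀ i, lo ≤ i → i ≤ m → (p i = i + 1 ∧ i < m) ∨ (i = p i + 1 ∧ p i < m) := by
      intro i h1 h2
      rw [hpeq]
      split_ifs with h <;> [right; left] <;> constructor <;> omega
    obtain ⟨σ', hσ'on, hσ'off⟩ :
        ∃ σ' : Fin n → Fin n, (∀ i, lo ≤ i → i ≤ m → σ' (u i) = u (p i)) ∧
          (∀ x, (∀ i, lo ≤ i → i ≤ m → u i ≠ x) → σ' x = σ x) := by
      refine ⟨fun x => if h : ∃ i, (lo ≤ i ∧ i ≤ m) ∧ u i = x then u (p h.choose) else σ x,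
        ?_, ?_⟩
      · intro i h1 h2
        have hex : ∃ j, (lo ≤ j ∧ j ≤ m) ∧ u j = u i := ⟨i, ⟨h1, h2⟩, rfl⟩
        simp only [dif_pos hex]
        have hspec := hex.choose_spec
        have : hex.choose = i := hinj_u _ hspec.1.2 _ h2 hspec.2
        rw [this]
      · intro x hx
        have hnex : ¬ ∃ i, (lo ≤ i ∧ i ≤ m) ∧ u i = x := by
          rintro ⟨i, ⟨h1, h2⟩, h3⟩
          exact hx i h1 h2 h3
        simp only [dif_neg hnex]
    -- generic injectivity on I ∪ path
    have hval : ∀ x, x ∈ (↑I ∪ {x | ∃ i, lo ≤ i ∧ i ≤ m ∧ u i = x} : Set (Fin n)) →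
        (∃ i, lo ≤ i ∧ i ≤ m ∧ u i = x ∧ σ' x = u (p i)) ∨
        ((∀ i, lo ≤ i → i ≤ m → u i ≠ x) ∧ x ∈ I ∧ σ' x = σ x) := by
      intro x hx
      by_cases hpath : ∃ i, lo ≤ i ∧ i ≤ m ∧ u i = x
      · obtain ⟨i, h1, h2, h3⟩ := hpath
        exact Or.inl ⟨i, h1, h2, h3, by rw [← h3]; exact hσ'on i h1 h2⟩
      · push_neg at hpath
        refine Or.inr ⟨hpath, ?_, hσ'off x hpath⟩
        rcases hx with hx | hx
        · exact hx
        · obtain ⟨i, h1, h2, h3⟩ := hx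
          exact absurd h3 (hpath i h1 h2)
    have hmixed : ∀ i, lo ≤ i → i ≤ m → ∀ y ∈ I, (∀ j, lo ≤ j → j ≤ m → u j ≠ y) →
        u (p i) = σ y → False := by
      intro i hi1 hi2 y hyI hyo hxy
      have hpm := hp_mem i hi1 hi2
      rcases Nat.lt_or_ge (p i) m with hlt | hge
      · have harc2 := harc (p i) hlt
        have : u (p i + 1) = y :=
          hinj (Finset.mem_coe.mpr harc2.1) (Finset.mem_coe.mpr hyI) (harc2.2.trans hxy)
        exact hyo (p i + 1) (by omega) (by omega) this
      · have hpim : p i = m := by omega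
        apply hmJ
        rw [hpim] at hxy
        rw [hxy]
        exact hmap y hyI
    have hinj_gen : Set.InjOn σ' (↑I ∪ {x | ∃ i, lo ≤ i ∧ i ≤ m ∧ u i = x}) := by
      intro x hx y hy hxy
      rcases hval x hx with ⟨i, hi1, hi2, hi3, hi4⟩ | ⟨hxo, hxI, hx4⟩ <;>
        rcases hval y hy with ⟨j, hj1, hj2, hj3, hj4⟩ | ⟨hyo, hyI, hy4⟩
      · rw [hi4, hj4] at hxy
        have hpij : p i = p j :=
          hinj_u _ (hp_mem i hi1 hi2).2 _ (hp_mem j hj1 hj2).2 hxy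
        have hij : i = j := by
          rw [← hp_invol i hi1 hi2, ← hp_invol j hj1 hj2, hpij]
        rw [← hi3, ← hj3, hij]
      · exfalso
        rw [hi4, hy4] at hxy
        exact hmixed i hi1 hi2 y hyI hyo hxy
      · exfalso
        rw [hx4, hj4] at hxy
        exact hmixed j hj1 hj2 x hxI hxo hxy.symm
      · exact hinj (Finset.mem_coe.mpr hxI) (Finset.mem_coe.mpr hyI)
          (by rw [← hx4, ← hy4, hxy])
    have hnz_gen : ∀ x, ((∃ i, lo ≤ i ∧ i ≤ m ∧ u i = x) ∨ x ∈ I) → A x (σ' x) ≠ 0 := by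
      intro x hx
      by_cases hpath : ∃ i, lo ≤ i ∧ i ≤ m ∧ u i = x
      · obtain ⟨i, h1, h2, rfl⟩ := hpath
        rw [hσ'on i h1 h2]
        rcases hp_arc i h1 h2 with ⟨hpi, him⟩ | ⟨hpi, him⟩
        · rw [hpi]
          exact hnzarc' i him
        · have := hnzarc (p i) him
          rwa [← hpi] at this
      · push_neg at hpath
        rcases hx with hx | hxI
        · obtain ⟨i, h1, h2, h3⟩ := hx
          exact absurd h3 (hpath i h1 h2)
        · rw [hσ'off x hpath]
          exact hnz x hxI
    rcases Nat.lt_or_ge lo 1 with hlo0 | hlo1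
    · -- m odd : contradiction with maximality
      exfalso
      have hlo0' : lo = 0 := by omega
      apply hmax (insert a I) (insert (u m) J) σ'
      · rw [Finset.card_insert_of_notMem haI, hI]
      · rw [Finset.card_insert_of_notMem hmJ, hJ]
      · intro x hx
        by_cases hpath : ∃ i, lo ≤ i ∧ i ≤ m ∧ u i = x
        · obtain ⟨i, h1, h2, rfl⟩ := hpath
          rw [hσ'on i h1 h2]
          have hpm := hp_mem i h1 h2
          rcases Nat.lt_or_ge (p i) m with hlt | hge
          · exact Finset.mem_insert_of_mem (hminJ _ hlt)
          · have hpim : p i = m := by omega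
            rw [hpim]
            exact Finset.mem_insert_self _ _
        · push_neg at hpath
          rw [hσ'off x hpath]
          have hxI : x ∈ I := by
            rcases Finset.mem_insert.mp hx with h | h
            · exact absurd (by rw [hu0, h] : u 0 = x) (hpath 0 (by omega) (by omega))
            · exact h
          exact Finset.mem_insert_of_mem (hmap x hxI)
      · apply hinj_gen.mono
        intro x hx
        rcases Finset.mem_insert.mp (Finset.mem_coe.mp hx) with h | h
        · exact Or.inr ⟨0, by omega, by omega, by rw [hu0, h]⟩
        · exact Or.inl (Finset.mem_coe.mpr h)
      · intro x hx
        apply hnz_gen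
        rcases Finset.mem_insert.mp hx with h | h
        · exact Or.inl ⟨0, by omega, by omega, by rw [hu0, h]⟩
        · exact Or.inr h
    · -- m even : recurse
      have hlo1' : lo = 1 := by omega
      set J' := insert (u m) (J.erase a) with hJ'def
      have hJ'card : J'.card = k := by
        have hk1 : 1 ≤ k := by rw [← hJ]; exact Finset.card_pos.mpr ⟨a, haJ⟩
        rw [hJ'def, Finset.card_insert_of_notMem
          (fun hmem => hmJ (Finset.mem_of_mem_erase hmem)),
          Finset.card_erase_of_mem haJ, hJ]
        omega
      have hmap' : ∀ x ∈ I, σ' x ∈ J' := by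
        intro x hx
        by_cases hpath : ∃ i, lo ≤ i ∧ i ≤ m ∧ u i = x
        · obtain ⟨i, h1, h2, rfl⟩ := hpath
          rw [hσ'on i h1 h2]
          have hpm := hp_mem i h1 h2
          rcases Nat.lt_or_ge (p i) m with hlt | hge
          · apply Finset.mem_insert_of_mem
            apply Finset.mem_erase.mpr
            refine ⟨?_, hminJ _ hlt⟩
            intro hh
            have : p i = 0 := hinj_u _ (by omega) 0 (by omega) (by rw [hh, hu0])
            omega
          · have hpim : p i = m := by omega
            rw [hpim]
            exact Finset.mem_insert_self _ _
        · push_neg at hpath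
          rw [hσ'off x hpath]
          apply Finset.mem_insert_of_mem
          apply Finset.mem_erase.mpr
          refine ⟨?_, hmap x hx⟩
          intro hh
          have h01 : σ (u 1) = u 0 := (harc 0 (by omega)).2
          have : u 1 = x :=
            hinj (Finset.mem_coe.mpr (huI 1 le_rfl hm1)) (Finset.mem_coe.mpr hx)
              (by rw [h01, hu0, hh])
          exact hpath 1 (by omega) (by omega) this
      have hinj' : Set.InjOn σ' ↑I := hinj_gen.mono (fun x hx => Or.inl hx)
      have himg' : I.image σ' = J' := by
        apply Finset.eq_of_subset_of_card_le
        · intro y hy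
          obtain ⟨x, hx, rfl⟩ := Finset.mem_image.mp hy
          exact hmap' x hx
        · rw [Finset.card_image_of_injOn hinj', hI, hJ'card]
      have hnz' : ∀ x ∈ I, A x (σ' x) ≠ 0 := fun x hx => hnz_gen x (Or.inr hx)
      have hd' : (J' \ I).card = d := by
        have hset : J' \ I = (J \ I).erase a := by
          ext x
          simp only [hJ'def, Finset.mem_sdiff, Finset.mem_insert, Finset.mem_erase]
          constructor
          · rintro ⟨h1 | h1, h2⟩
            · exact (h2 (h1 ▸ humI)).elim
            · exact ⟨h1.1, h1.2, h2⟩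
          · rintro ⟨h1, h2, h3⟩
            exact ⟨Or.inr ⟨h1, h2⟩, h3⟩
        rw [hset, Finset.card_erase_of_mem ha, hd]
        omega
      exact ih I J' σ' hd' hI hJ'card hmap' hinj' himg' hnz'

private lemma sachs_of_perm {n : ℕ} (A : Matrix (Fin n) (Fin n) ℝ)
    (hdiag : ∀ i, A i i = 0)
    (T : Finset (Fin n)) (τ : Fin n → Fin n)
    (hT : ∀ x ∈ T, τ x ∈ T) (hinj : Set.InjOn τ ↑T) (himg : T.image τ = T)
    (hnz : ∀ x ∈ T, A x (τ x) ≠ 0) :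
    ∃ H : (graphOf A).Subgraph, IsSachs H ∧ H.verts.ncard = T.card := by
  classical
  have hfix : ∀ x ∈ T, τ x ≠ x := by
    intro x hx h
    exact hnz x hx (by rw [h, hdiag])
  have hadj_sub : ∀ {v w : Fin n}, ((v ∈ T ∧ τ v = w) ∨ (w ∈ T ∧ τ w = v)) →
      (graphOf A).Adj v w := by
    rintro v w (⟨hv, rfl⟩ | ⟨hw, hτ⟩)
    · exact (SimpleGraph.fromRel_adj _ _ _).mpr
        ⟨fun h => hfix v hv h.symm, Or.inl (hnz v hv)⟩
    · refine (SimpleGraph.fromRel_adj _ _ _).mpr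
        ⟨fun h => hfix w hw (h ▸ hτ), Or.inr (hτ ▸ hnz w hw)⟩
  have hedge : ∀ {v w : Fin n}, ((v ∈ T ∧ τ v = w) ∨ (w ∈ T ∧ τ w = v)) →
      v ∈ (↑T : Set (Fin n)) := by
    rintro v w (⟨hv, _⟩ | ⟨hw, hτ⟩)
    · exact Finset.mem_coe.mpr hv
    · exact Finset.mem_coe.mpr (hτ ▸ (himg ▸ Finset.mem_image_of_mem τ hw))
  set H : (graphOf A).Subgraph :=
    { verts := ↑T
      Adj := fun x y => (x ∈ T ∧ τ x = y) ∨ (y ∈ T ∧ τ y = x)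
      adj_sub := fun h => hadj_sub h
      edge_vert := fun h => hedge h
      symm := ⟨fun x y h => h.symm⟩ } with hH
  refine ⟨H, ?_, ?_⟩
  swap
  · exact Set.ncard_coe_finset T
  -- the permutation of the vertex set
  have hmem : ∀ v : (↑T : Set (Fin n)), τ (v : Fin n) ∈ T :=
    fun v => hT v (Finset.mem_coe.mp v.2)
  set t : (↑T : Set (Fin n)) → (↑T : Set (Fin n)) :=
    fun v => ⟨τ v, Finset.mem_coe.mpr (hmem v)⟩ with ht
  have htinj : Function.Injective t := by
    intro v w h
    exact Subtype.ext (hinj v.2 w.2 (congrArg Subtype.val h))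
  have htsurj : Function.Surjective t := by
    rintro ⟨w, hw⟩
    have hw' : w ∈ T.image τ := by rw [himg]; exact Finset.mem_coe.mp hw
    obtain ⟨x, hx, hxe⟩ := Finset.mem_image.mp hw'
    exact ⟨⟨x, Finset.mem_coe.mpr hx⟩, Subtype.ext hxe⟩
  set e : Equiv.Perm (↑T : Set (Fin n)) := Equiv.ofBijective t ⟨htinj, htsurj⟩ with he
  have heval : ∀ v : (↑T : Set (Fin n)), ((e v : (↑T : Set (Fin n))) : Fin n) = τ v :=
    fun v => rfl
  have hesymm : ∀ v : (↑T : Set (Fin n)), τ ((e.symm v : (↑T : Set (Fin n))) : Fin n) = v := by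
    intro v
    rw [← heval (e.symm v), e.apply_symm_apply]
  have hfix' : ∀ v : (↑T : Set (Fin n)), e v ≠ v := by
    intro v h
    apply hfix v.1 (Finset.mem_coe.mp v.2)
    rw [← heval v, h]
  have hadjSC : ∀ v w : (↑T : Set (Fin n)), H.coe.Adj v w → e.SameCycle v w := by
    intro v w h
    rw [SimpleGraph.Subgraph.coe_adj] at h
    have h' : ((v : Fin n) ∈ T ∧ τ v = w) ∨ ((w : Fin n) ∈ T ∧ τ w = v) := h
    rcases h' with ⟨hv, hvw⟩ | ⟨hw, hwv⟩
    · exact ⟨1, by rw [zpow_one]; exact Subtype.ext hvw⟩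
    · exact Equiv.Perm.SameCycle.symm (⟨1, by rw [zpow_one]; exact Subtype.ext hwv⟩ : e.SameCycle w v)
  have hreach : ∀ v w : (↑T : Set (Fin n)), H.coe.Reachable v w → e.SameCycle v w := by
    intro v w h
    obtain ⟨p⟩ := h
    induction p with
    | nil => exact Equiv.Perm.SameCycle.refl _ _
    | cons h q ih => exact (hadjSC _ _ h).trans ih
  have hL3 : ∀ v w : (↑T : Set (Fin n)), e.SameCycle v w → e (e w) = w → e (e v) = v := by
    rintro v w ⟨z, hz⟩ h
    have hv : (e ^ (-z)) w = v := by
      rw [← hz, ← Equiv.Perm.mul_apply, ← zpow_add]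
      simp
    rcases perm_two_orbit e w h (-z) with h1 | h1
    · have hvw : v = w := hv.symm.trans h1
      rw [hvw]; exact h
    · have hvw : v = e w := hv.symm.trans h1
      rw [hvw]
      exact congrArg e h
  have hnbr : ∀ w : (↑T : Set (Fin n)),
      H.neighborSet ↑w = {((e w : (↑T : Set (Fin n))) : Fin n),
        ((e.symm w : (↑T : Set (Fin n))) : Fin n)} := by
    intro w
    ext z
    simp only [SimpleGraph.Subgraph.mem_neighborSet, Set.mem_insert_iff,
      Set.mem_singleton_iff]
    constructor
    · intro hadj
      have h' : ((w : Fin n) ∈ T ∧ τ w = z) ∨ (z ∈ T ∧ τ z = w) := hadj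
      rcases h' with ⟨hw', hτ⟩ | ⟨hz, hτ⟩
      · left; rw [← hτ]; rfl
      · right
        have hez : e ⟨z, Finset.mem_coe.mpr hz⟩ = w := Subtype.ext hτ
        rw [← hez, Equiv.symm_apply_apply]
    · rintro (rfl | rfl)
      · exact Or.inl ⟨Finset.mem_coe.mp w.2, rfl⟩
      · exact Or.inr ⟨Finset.mem_coe.mp (e.symm w).2, hesymm w⟩
  intro C
  obtain ⟨v, hv⟩ := C.exists_rep
  by_cases h2 : e (e v) = v
  · left
    have hsupp : C.supp = {v, e v} := by
      ext w
      simp only [SimpleGraph.ConnectedComponent.mem_supp_iff, Set.mem_insert_iff,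
        Set.mem_singleton_iff]
      constructor
      · intro hw
        have hr : H.coe.Reachable w v := SimpleGraph.ConnectedComponent.eq.mp (hw.trans hv.symm)
        obtain ⟨z, hz⟩ := Equiv.Perm.SameCycle.symm (hreach w v hr)
        rcases perm_two_orbit e v h2 z with h1 | h1
        · left; rw [← hz, h1]
        · right; rw [← hz, h1]
      · rintro (rfl | rfl)
        · exact hv
        · rw [← hv]
          apply SimpleGraph.ConnectedComponent.eq.mpr
          have hadj : H.coe.Adj v (e v) := by
            rw [SimpleGraph.Subgraph.coe_adj]
            exact Or.inl ⟨Finset.mem_coe.mp v.2, rfl⟩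
          exact hadj.reachable.symm
    rw [hsupp]
    exact Set.ncard_pair (Ne.symm (hfix' v))
  · right
    intro w hw
    have hw' : H.coe.connectedComponentMk w = C :=
      (SimpleGraph.ConnectedComponent.mem_supp_iff C w).mp hw
    have hr : H.coe.Reachable w v := SimpleGraph.ConnectedComponent.eq.mp (hw'.trans hv.symm)
    have hsc : e.SameCycle v w := Equiv.Perm.SameCycle.symm (hreach w v hr)
    have h2w : ¬ e (e w) = w := fun hww => h2 (hL3 v w hsc hww)
    rw [hnbr w]
    apply Set.ncard_pair
    intro hval
    apply h2w
    have hee : e w = e.symm w := Subtype.ext hval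
    calc e (e w) = e (e.symm w) := by rw [hee]
      _ = w := e.apply_symm_apply w

theorem exists_sachs_subgraph_of_permRank {n : ℕ} (A : Matrix (Fin n) (Fin n) ℝ)
    (hnonneg : ∀ i j, 0 ≤ A i j) (hsym : A.IsSymm) (hdiag : ∀ i, A i i = 0)
    (k : ℕ) (hk : permRank A = k) :
    ∃ H : (graphOf A).Subgraph, IsSachs H ∧ H.verts.ncard = k := by
  classical
  set S : Set ℕ := {m | ∃ f g : Fin m → Fin n, Function.Injective f ∧ Function.Injective g ∧
    (A.submatrix f g).per ≠ 0} with hSdef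
  have h0 : 0 ∈ S := by
    refine ⟨Fin.elim0, Fin.elim0, fun x => x.elim0, fun x => x.elim0, ?_⟩
    rw [Matrix.per]
    simp
  have hbdd : BddAbove S := by
    refine ⟨n, fun x hx => ?_⟩
    obtain ⟨f, g, hf, _, _⟩ := hx
    simpa using Fintype.card_le_of_injective f hf
  have hrank : permRank A = sSup S := rfl
  have hmem : k ∈ S := by
    rw [← hk, hrank]
    exact Nat.sSup_mem ⟨0, h0⟩ hbdd
  obtain ⟨f, g, hf, hg, hper⟩ := hmem
  obtain ⟨e, he⟩ : ∃ e : Fin k ≃ Fin k, ∀ i, A (f i) (g (e i)) ≠ 0 := by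
    by_contra hcon
    push_neg at hcon
    apply hper
    rw [Matrix.per]
    apply Finset.sum_eq_zero
    intro e _
    obtain ⟨i, hi⟩ := hcon e
    apply Finset.prod_eq_zero (Finset.mem_univ i)
    simpa using hi
  have hmax : ∀ (I' J' : Finset (Fin n)) (σ' : Fin n → Fin n),
      I'.card = k + 1 → J'.card = k + 1 → (∀ x ∈ I', σ' x ∈ J') →
      Set.InjOn σ' ↑I' → (∀ x ∈ I', A x (σ' x) ≠ 0) → False := by
    intro I' J' σ' hI' hJ' hmapx hinjx hnzx
    set f' : Fin (k + 1) → Fin n := fun i => ((I'.orderIsoOfFin hI') i : Fin n) with hf'def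
    set g' : Fin (k + 1) → Fin n := fun i => ((J'.orderIsoOfFin hJ') i : Fin n) with hg'def
    have hf' : Function.Injective f' :=
      fun i j h => (I'.orderIsoOfFin hI').injective (Subtype.ext h)
    have hg' : Function.Injective g' :=
      fun i j h => (J'.orderIsoOfFin hJ').injective (Subtype.ext h)
    have hf'mem : ∀ i, f' i ∈ I' := fun i => ((I'.orderIsoOfFin hI') i).2
    set eh : Fin (k + 1) → Fin (k + 1) :=
      fun i => (J'.orderIsoOfFin hJ').symm ⟨σ' (f' i), hmapx _ (hf'mem i)⟩ with hehdef
    have hehval : ∀ i, g' (eh i) = σ' (f' i) := by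
      intro i
      rw [hg'def, hehdef]
      simp
    have hehinj : Function.Injective eh := by
      intro i j h
      have h2 : σ' (f' i) = σ' (f' j) := by
        rw [← hehval, ← hehval, h]
      exact hf' (hinjx (Finset.mem_coe.mpr (hf'mem i)) (Finset.mem_coe.mpr (hf'mem j)) h2)
    set e' : Fin (k + 1) ≃ Fin (k + 1) :=
      Equiv.ofBijective eh (Finite.injective_iff_bijective.mp hehinj) with he'def
    have hpos : 0 < (A.submatrix f' g').per := by
      rw [Matrix.per]
      apply Finset.sum_pos'
      · intro x _
        exact Finset.prod_nonneg fun i _ => hnonneg _ _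
      · refine ⟨e', Finset.mem_univ _, Finset.prod_pos fun i _ => ?_⟩
        have h1 : (A.submatrix f' g') i (e' i) = A (f' i) (σ' (f' i)) := by
          rw [Matrix.submatrix_apply, show e' i = eh i from rfl, hehval]
        rw [h1]
        exact lt_of_le_of_ne (hnonneg _ _) (Ne.symm (hnzx _ (hf'mem i)))
    have hS : k + 1 ∈ S := ⟨f', g', hf', hg', ne_of_gt hpos⟩
    have hle : k + 1 ≤ permRank A := by
      rw [hrank]
      exact le_csSup hbdd hS
    omega
  set I0 := Finset.univ.image f with hI0
  set J0 := Finset.univ.image g with hJ0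
  obtain ⟨σ0, hσ0⟩ : ∃ σ0 : Fin n → Fin n, ∀ i, σ0 (f i) = g (e i) := by
    refine ⟨fun x => if h : ∃ i, f i = x then g (e h.choose) else x, ?_⟩
    intro i
    have hex : ∃ j, f j = f i := ⟨i, rfl⟩
    simp only [dif_pos hex]
    rw [hf hex.choose_spec]
  have hI0card : I0.card = k := by
    rw [hI0, Finset.card_image_of_injective _ hf, Finset.card_univ, Fintype.card_fin]
  have hJ0card : J0.card = k := by
    rw [hJ0, Finset.card_image_of_injective _ hg, Finset.card_univ, Fintype.card_fin]
  have hmap0 : ∀ x ∈ I0, σ0 x ∈ J0 := by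
    intro x hx
    obtain ⟨i, _, rfl⟩ := Finset.mem_image.mp hx
    rw [hσ0]
    exact Finset.mem_image_of_mem g (Finset.mem_univ _)
  have hinj0 : Set.InjOn σ0 ↑I0 := by
    intro x hx y hy hxy
    obtain ⟨i, _, rfl⟩ := Finset.mem_image.mp (Finset.mem_coe.mp hx)
    obtain ⟨j, _, rfl⟩ := Finset.mem_image.mp (Finset.mem_coe.mp hy)
    rw [hσ0, hσ0] at hxy
    exact congrArg f (e.injective (hg hxy))
  have himg0 : I0.image σ0 = J0 := by
    apply Finset.eq_of_subset_of_card_le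
    · intro y hy
      obtain ⟨x, hx, rfl⟩ := Finset.mem_image.mp hy
      exact hmap0 x hx
    · rw [Finset.card_image_of_injOn hinj0, hI0card, hJ0card]
  have hnz0 : ∀ x ∈ I0, A x (σ0 x) ≠ 0 := by
    intro x hx
    obtain ⟨i, _, rfl⟩ := Finset.mem_image.mp hx
    rw [hσ0]
    exact he i
  obtain ⟨T, τ, hTcard, hT1, hT2, hT3, hT4⟩ :=
    core_lemma A hsym hdiag k hmax ((J0 \ I0).card) I0 J0 σ0 rfl hI0card hJ0card
      hmap0 hinj0 himg0 hnz0
  obtain ⟨H, hH1, hH2⟩ := sachs_of_perm A hdiag T τ hT1 hT2 hT3 hT4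
  exact ⟨H, hH1, by rw [hH2, hTcard]⟩
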